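/- arXiv:2103.08742 — 5 statements merged into one kernel-verified Lean document; each statement's English description precedes it below -/
import Mathlib

section
/- For an n-by-n matrix M over a field (n ≥ 2), if the determinant of the central (n-2)-by-(n-2) submatrix (obtained by deleting the first and last rows and columns) is nonzero, then det(M) · det(M with first and last rows and columns deleted) = det(M with first row and first column deleted) · det(M with last row and last column deleted) − det(M with first row and last column deleted) · det(M with last row and first column deleted). -/
open Matrix Equiv

/-- Desnanot–Jacobi–Sylvester identity: for an (n+2)-by-(n+2) matrix `M` over a field,
if the central n-by-n minor (first and last rows and columns deleted) is nonzero, then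
`det M * det(central) = det(M del first row/col) * det(M del last row/col)
  - det(M del first row, last col) * det(M del last row, first col)`. -/
theorem desnanot_jacobi {K : Type*} [Field K] (n : ℕ)
    (M : Matrix (Fin (n + 2)) (Fin (n + 2)) K)
    (h : (M.submatrix (fun a : Fin n => a.succ.castSucc) (fun a : Fin n => a.succ.castSucc)).det ≠ 0) :
    M.det * (M.submatrix (fun a : Fin n => a.succ.castSucc) (fun a : Fin n => a.succ.castSucc)).det
      = (M.submatrix Fin.succ Fin.succ).det * (M.submatrix Fin.castSucc Fin.castSucc).det
        - (M.submatrix Fin.succ Fin.castSucc).det * (M.submatrix Fin.castSucc Fin.succ).det := by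
  classical
  set mid : Fin n → Fin (n+2) := fun a => a.succ.castSucc with hmiddef
  set C : Matrix (Fin n) (Fin n) K := M.submatrix mid mid with hCdef
  have : Invertible C := C.invertibleOfIsUnitDet (isUnit_iff_ne_zero.2 h)
  -- corner entries
  set B2 : Matrix (Fin n) (Fin 2) K := Matrix.of fun a b => M (mid a) (![0, Fin.last (n+1)] b) with hB2
  set C2 : Matrix (Fin 2) (Fin n) K := Matrix.of fun b a => M (![0, Fin.last (n+1)] b) (mid a) with hC2
  set D : Matrix (Fin 2) (Fin 2) K := Matrix.of fun b b' => M (![0, Fin.last (n+1)] b) (![0, Fin.last (n+1)] b') with hD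
  set S : Matrix (Fin 2) (Fin 2) K := D - C2 * ⅟C * B2 with hS
  -- equivalences
  have hg2 : Function.Bijective (Sum.elim mid ![0, Fin.last (n+1)] : Fin n ⊕ Fin 2 → Fin (n+2)) := by
    rw [Fintype.bijective_iff_injective_and_card]
    refine ⟨?_, by simp⟩
    rintro (a|a) (b|b) hab
    · have hv := congrArg Fin.val hab
      simp only [Sum.elim_inl, hmiddef, Fin.coe_castSucc, Fin.val_succ] at hv
      exact congrArg Sum.inl (Fin.ext (by omega))
    · exfalso
      have ha := a.isLt
      have hv := congrArg Fin.val hab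
      fin_cases b <;> simp [hmiddef] at hv <;> omega
    · exfalso
      have hb := b.isLt
      have hv := congrArg Fin.val hab
      fin_cases a <;> simp [hmiddef] at hv <;> omega
    · have hv := congrArg Fin.val hab
      fin_cases a <;> fin_cases b <;> simp at hv ⊢ <;> omega
  have hg1 : Function.Bijective (Sum.elim Fin.castSucc (fun _ : Fin 1 => Fin.last n) : Fin n ⊕ Fin 1 → Fin (n+1)) := by
    rw [Fintype.bijective_iff_injective_and_card]
    refine ⟨?_, by simp⟩
    rintro (a|a) (b|b) hab
    · have hv := congrArg Fin.val hab
      simp only [Sum.elim_inl, Fin.coe_castSucc] at hv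
      exact congrArg Sum.inl (Fin.ext hv)
    · exfalso
      have ha := a.isLt
      have hv := congrArg Fin.val hab
      simp only [Sum.elim_inl, Sum.elim_inr, Fin.coe_castSucc, Fin.val_last] at hv
      omega
    · exfalso
      have hb := b.isLt
      have hv := congrArg Fin.val hab
      simp only [Sum.elim_inl, Sum.elim_inr, Fin.coe_castSucc, Fin.val_last] at hv
      omega
    · simp [Subsingleton.elim a b]
  have hg0 : Function.Bijective (Sum.elim Fin.succ (fun _ : Fin 1 => (0 : Fin (n+1))) : Fin n ⊕ Fin 1 → Fin (n+1)) := by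
    rw [Fintype.bijective_iff_injective_and_card]
    refine ⟨?_, by simp⟩
    rintro (a|a) (b|b) hab
    · have hv := congrArg Fin.val hab
      simp only [Sum.elim_inl, Fin.val_succ] at hv
      exact congrArg Sum.inl (Fin.ext (by omega))
    · exact absurd hab (Fin.succ_ne_zero a)
    · exact absurd hab.symm (Fin.succ_ne_zero b)
    · simp [Subsingleton.elim a b]
  set g2 : Fin n ⊕ Fin 2 ≃ Fin (n+2) := Equiv.ofBijective _ hg2 with hg2def
  set g1 : Fin n ⊕ Fin 1 ≃ Fin (n+1) := Equiv.ofBijective _ hg1 with hg1def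
  set g0 : Fin n ⊕ Fin 1 ≃ Fin (n+1) := Equiv.ofBijective _ hg0 with hg0def
  -- block decomposition of M
  have key2 : M.submatrix g2 g2 = fromBlocks C B2 C2 D := by
    ext (i|i) (j|j) <;> rfl
  have hdetM : M.det = C.det * S.det := by
    rw [← det_submatrix_equiv_self g2 M, key2, det_fromBlocks₁₁, hS]
  -- the four (n+1)-minors
  have key11 : (M.submatrix Fin.succ Fin.succ).submatrix g1 g1
      = fromBlocks C (Matrix.of fun a _ => B2 a 1) (Matrix.of fun _ a => C2 1 a)
          (Matrix.of fun _ _ => D 1 1) := by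
    ext (i|i) (j|j) <;>
      simp [hCdef, hg1def, hmiddef, hB2, hC2, hD, Fin.succ_castSucc, Fin.succ_last, -Fin.castSucc_succ]
  have key00 : (M.submatrix Fin.castSucc Fin.castSucc).submatrix g0 g0
      = fromBlocks C (Matrix.of fun a _ => B2 a 0) (Matrix.of fun _ a => C2 0 a)
          (Matrix.of fun _ _ => D 0 0) := by
    ext (i|i) (j|j) <;>
      simp [hCdef, hg0def, hmiddef, hB2, hC2, hD]
  have key10 : (M.submatrix Fin.succ Fin.castSucc).submatrix g1 g0
      = fromBlocks C (Matrix.of fun a _ => B2 a 0) (Matrix.of fun _ a => C2 1 a)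
          (Matrix.of fun _ _ => D 1 0) := by
    ext (i|i) (j|j) <;>
      simp [hCdef, hg1def, hg0def, hmiddef, hB2, hC2, hD, Fin.succ_castSucc, Fin.succ_last, -Fin.castSucc_succ]
  have key01 : (M.submatrix Fin.castSucc Fin.succ).submatrix g0 g1
      = fromBlocks C (Matrix.of fun a _ => B2 a 1) (Matrix.of fun _ a => C2 0 a)
          (Matrix.of fun _ _ => D 0 1) := by
    ext (i|i) (j|j) <;>
      simp [hCdef, hg1def, hg0def, hmiddef, hB2, hC2, hD, Fin.succ_castSucc, Fin.succ_last, -Fin.castSucc_succ]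
  -- entry computation helper
  have entry : ∀ i j : Fin 2,
      ((Matrix.of fun _ _ => D i j) - (Matrix.of fun _ a => C2 i a) * ⅟C
        * (Matrix.of fun a _ => B2 a j) : Matrix (Fin 1) (Fin 1) K) 0 0 = S i j := by
    intro i j
    simp [hS, Matrix.mul_apply, Matrix.sub_apply]
  have h11 : (M.submatrix Fin.succ Fin.succ).det = C.det * S 1 1 := by
    rw [← det_submatrix_equiv_self g1, key11, det_fromBlocks₁₁, det_fin_one, entry]
  have h00 : (M.submatrix Fin.castSucc Fin.castSucc).det = C.det * S 0 0 := by
    rw [← det_submatrix_equiv_self g0, key00, det_fromBlocks₁₁, det_fin_one, entry]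
  -- cross minors with sign
  set σ : Perm (Fin n ⊕ Fin 1) := g0.trans g1.symm with hσ
  set τ : Perm (Fin n ⊕ Fin 1) := g1.trans g0.symm with hτ
  have hστ : σ * τ = 1 := by
    ext x
    simp [hσ, hτ, Perm.mul_apply]
  have fact10 : ((Perm.sign σ : ℤ) : K) * (M.submatrix Fin.succ Fin.castSucc).det
      = C.det * S 1 0 := by
    have e1 : (M.submatrix Fin.succ Fin.castSucc).submatrix g1 g0
        = ((M.submatrix Fin.succ Fin.castSucc).submatrix g1 g1).submatrix id σ := by
      ext i j
      simp [hσ]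
    rw [← entry 1 0, ← det_fin_one ((Matrix.of fun _ _ => D 1 0) - _ * ⅟C * _),
      ← det_fromBlocks₁₁, ← key10, e1, Matrix.det_permute' σ, det_submatrix_equiv_self]
  have fact01 : ((Perm.sign τ : ℤ) : K) * (M.submatrix Fin.castSucc Fin.succ).det
      = C.det * S 0 1 := by
    have e1 : (M.submatrix Fin.castSucc Fin.succ).submatrix g0 g1
        = ((M.submatrix Fin.castSucc Fin.succ).submatrix g0 g0).submatrix id τ := by
      ext i j
      simp [hτ]
    rw [← entry 0 1, ← det_fin_one ((Matrix.of fun _ _ => D 0 1) - _ * ⅟C * _),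
      ← det_fromBlocks₁₁, ← key01, e1, Matrix.det_permute' τ, det_submatrix_equiv_self]
  have hsign : ((Perm.sign σ : ℤ) : K) * ((Perm.sign τ : ℤ) : K) = 1 := by
    rw [← Int.cast_mul, ← Units.val_mul, ← _root_.map_mul, hστ]
    simp
  have hcross : (M.submatrix Fin.succ Fin.castSucc).det * (M.submatrix Fin.castSucc Fin.succ).det
      = (C.det * S 1 0) * (C.det * S 0 1) := by
    rw [← fact10, ← fact01, mul_mul_mul_comm, hsign, one_mul]
  have hdetS : S.det = S 0 0 * S 1 1 - S 0 1 * S 1 0 := det_fin_two S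
  rw [hdetM, h11, h00, hcross, hdetS]
  ring
end

section
/- For any positive integers m and n and any signature (e_1, e_2, ..., e_{min(m,n)}) with each e_k ∈ {−1, 1}, there exists a real m-by-n matrix A such that for every k and every k-by-k minor D of A, e_k · D > 0. -/
open Finset Matrix Filter

namespace SSRaux

/-- pointwise lower bound for strictly monotone ℕ-valued tuples -/
lemma strictMono_nat_le {k : ℕ} {h : Fin k → ℕ} (hh : StrictMono h) :
    ∀ j, (hj : j < k) → j ≤ h ⟨j, hj⟩ := by
  intro j
  induction j with
  | zero => intro hj; exact Nat.zero_le _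
  | succ j ih =>
    intro hj
    have h1 : (⟨j, by omega⟩ : Fin k) < ⟨j + 1, hj⟩ := by
      simp [Fin.lt_def]
    have h2 := hh h1
    have h3 := ih (by omega)
    omega

lemma strictMono_nat_le' {k : ℕ} {h : Fin k → ℕ} (hh : StrictMono h) (i : Fin k) :
    (i : ℕ) ≤ h i := by
  have := strictMono_nat_le hh i i.isLt
  simpa using this

lemma sorted_exists {k p : ℕ} (g : Fin k → Fin p) (hg : Function.Injective g) :
    ∃ h : Fin k → ℕ, StrictMono h ∧ (∑ i, h i) = (∑ i, (g i : ℕ)) ∧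
      ∀ a : Fin k, ∃ b : Fin k, h b = (g a : ℕ) := by
  refine ⟨fun i => (g (Tuple.sort g i) : ℕ), ?_, ?_, ?_⟩
  · have hmono : Monotone (g ∘ Tuple.sort g) := Tuple.monotone_sort g
    have hinj : Function.Injective (g ∘ Tuple.sort g) :=
      hg.comp (Tuple.sort g).injective
    have hsm : StrictMono (g ∘ Tuple.sort g) := hmono.strictMono_of_injective hinj
    intro a b hab
    exact hsm hab
  · exact Equiv.sum_comp (Tuple.sort g) (fun i => (g i : ℕ))
  · intro a; exact ⟨(Tuple.sort g).symm a, by simp⟩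

lemma T_le_sum {k p : ℕ} (g : Fin k → Fin p) (hg : Function.Injective g) :
    (∑ i : Fin k, (i : ℕ)) ≤ ∑ i, (g i : ℕ) := by
  obtain ⟨h, hsm, hsum, -⟩ := sorted_exists g hg
  rw [← hsum]
  exact Finset.sum_le_sum fun i _ => strictMono_nat_le' hsm i

lemma lt_of_sum_le {k p : ℕ} (g : Fin k → Fin p) (hg : Function.Injective g)
    (hs : (∑ i, (g i : ℕ)) ≤ ∑ i : Fin k, (i : ℕ)) : ∀ a, (g a : ℕ) < k := by
  intro a
  by_contra hka
  push_neg at hka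
  obtain ⟨h, hsm, hsum, hsurj⟩ := sorted_exists g hg
  obtain ⟨b, hb⟩ := hsurj a
  have h1 : ∑ i ∈ Finset.univ.erase b, (i : ℕ) ≤ ∑ i ∈ Finset.univ.erase b, h i :=
    Finset.sum_le_sum fun i _ => strictMono_nat_le' hsm i
  have h2 : h b + ∑ i ∈ Finset.univ.erase b, h i = ∑ i, h i :=
    Finset.add_sum_erase _ _ (Finset.mem_univ b)
  have h3 : (b : ℕ) + ∑ i ∈ Finset.univ.erase b, (i : ℕ) = ∑ i : Fin k, (i : ℕ) :=
    Finset.add_sum_erase _ _ (Finset.mem_univ b)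
  have hbk : (b : ℕ) < k := b.isLt
  omega

/-- expansion of a determinant whose rows are sums of scaled fixed vectors -/
lemma det_expand {k p : ℕ} (d : Fin k → Fin p → ℝ) (w : Fin p → Fin k → ℝ) :
    (Matrix.of fun i j => ∑ s : Fin p, d i s * w s j).det =
      ∑ g : Fin k → Fin p, (∏ i, d i (g i)) * (Matrix.of fun i j => w (g i) j).det := by
  have h1 : (Matrix.of fun i j => ∑ s : Fin p, d i s * w s j) =
      (fun i => ∑ s : Fin p, d i s • w s) := by
    funext i j
    simp [Finset.sum_apply]
  have h2 : (Matrix.of fun i j => ∑ s : Fin p, d i s * w s j).det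
      = (Matrix.detRowAlternating (n := Fin k) (R := ℝ)).toMultilinearMap
          (fun i => ∑ s : Fin p, d i s • w s) := by
    rw [show ((Matrix.detRowAlternating (n := Fin k) (R := ℝ)).toMultilinearMap
          (fun i => ∑ s : Fin p, d i s • w s))
        = Matrix.det (Matrix.of fun i => ∑ s : Fin p, d i s • w s) from rfl, ← h1]
    rfl
  rw [h2]
  rw [(Matrix.detRowAlternating (n := Fin k) (R := ℝ)).toMultilinearMap.map_sum
    (g := fun i s => d i s • w s)]
  refine Finset.sum_congr rfl fun g _ => ?_
  rw [(Matrix.detRowAlternating (n := Fin k) (R := ℝ)).toMultilinearMap.map_smul_univ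
    (fun i => d i (g i)) (fun i => w (g i))]
  rw [smul_eq_mul]
  rfl

noncomputable def sg (e : ℕ → ℝ) : ℕ → ℝ := fun s => if s = 0 then e 1 else e (s + 1) * e s

lemma prod_sg {m n : ℕ} (e : ℕ → ℝ)
    (he : ∀ k, 1 ≤ k → k ≤ min m n → e k = 1 ∨ e k = -1) :
    ∀ k, 1 ≤ k → k ≤ min m n → ∏ s ∈ Finset.range k, sg e s = e k := by
  intro k
  induction k with
  | zero => omega
  | succ k ih =>
    intro _ hk
    rcases Nat.eq_zero_or_pos k with hk0 | hk1
    · subst hk0; simp [sg]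
    · rw [Finset.prod_range_succ, ih hk1 (by omega)]
      have hne : k ≠ 0 := by omega
      rcases he k hk1 (by omega) with h | h <;>
        simp only [sg, if_neg hne] <;> rw [h] <;> ring

noncomputable def mat (e : ℕ → ℝ) (m n : ℕ) (ε : ℝ) : Matrix (Fin m) (Fin n) ℝ :=
  Matrix.of fun i j => ∑ s : Fin (min m n),
    (sg e (s : ℕ) * ε ^ (s : ℕ) * (((i : ℕ) : ℝ) + 1) ^ (s : ℕ)) * ((((j : ℕ) : ℝ) + 1) ^ (s : ℕ))


lemma key {m n : ℕ} (e : ℕ → ℝ)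
    (he : ∀ k, 1 ≤ k → k ≤ min m n → e k = 1 ∨ e k = -1)
    {k : ℕ} (r : Fin k → Fin m) (c : Fin k → Fin n) (hk : 0 < k)
    (hr : StrictMono r) (hc : StrictMono c) :
    ∀ᶠ ε in nhdsWithin (0 : ℝ) (Set.Ioi 0),
      0 < e k * ((mat e m n ε).submatrix r c).det := by
  classical
  set p := min m n with hp
  have hkm : k ≤ m := by simpa using Fintype.card_le_of_injective r hr.injective
  have hkn : k ≤ n := by simpa using Fintype.card_le_of_injective c hc.injective
  have hkp : k ≤ p := le_min hkm hkn
  have hk1 : 1 ≤ k := hk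
  have he2 : e k * e k = 1 := by
    rcases he k hk1 hkp with h | h <;> rw [h] <;> norm_num
  set xr : Fin k → ℝ := fun i => ((r i : ℕ) : ℝ) + 1 with hxr
  set yc : Fin k → ℝ := fun j => ((c j : ℕ) : ℝ) + 1 with hyc
  set N : (Fin k → Fin p) → ℕ := fun g => ∑ i, (g i : ℕ) with hN
  set T : ℕ := ∑ i : Fin k, (i : ℕ) with hT
  set C : (Fin k → Fin p) → ℝ := fun g =>
    (∏ i, sg e (g i : ℕ) * xr i ^ (g i : ℕ)) *
      (Matrix.of fun i j => yc j ^ ((g i : ℕ))).det with hC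
  set F : ℝ → ℝ := fun ε => ∑ g : Fin k → Fin p, ε ^ (N g - T) * (e k * C g) with hF
  -- vanishing for non-injective g
  have hCzero : ∀ g : Fin k → Fin p, ¬ Function.Injective g → C g = 0 := by
    intro g hg
    rw [Function.not_injective_iff] at hg
    obtain ⟨a, b, hab, hne⟩ := hg
    have : (Matrix.of fun i j => yc j ^ ((g i : ℕ))).det = 0 := by
      refine Matrix.det_zero_of_row_eq hne ?_
      funext j
      simp [hab]
    simp [hC, this]
  -- determinant expansion
  have hdet : ∀ ε : ℝ, ((mat e m n ε).submatrix r c).det = ∑ g : Fin k → Fin p, ε ^ N g * C g := by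
    intro ε
    have hsub : (mat e m n ε).submatrix r c =
        Matrix.of fun i j => ∑ s : Fin p,
          (sg e (s : ℕ) * ε ^ (s : ℕ) * xr i ^ (s : ℕ)) * (yc j ^ (s : ℕ)) := by
      rfl
    rw [hsub, det_expand]
    refine Finset.sum_congr rfl fun g _ => ?_
    have hprod : (∏ i, sg e (g i : ℕ) * ε ^ (g i : ℕ) * xr i ^ (g i : ℕ))
        = (∏ i, sg e (g i : ℕ) * xr i ^ (g i : ℕ)) * ε ^ N g := by
      rw [hN, ← Finset.prod_pow_eq_pow_sum, ← Finset.prod_mul_distrib]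
      exact Finset.prod_congr rfl fun i _ => by ring
    rw [hprod, hC]
    ring
  -- identity for positive ε
  have hident : ∀ ε : ℝ, ε ∈ Set.Ioi (0:ℝ) →
      e k * ((mat e m n ε).submatrix r c).det = ε ^ T * F ε := by
    intro ε hε
    rw [hdet, hF, Finset.mul_sum, Finset.mul_sum]
    refine Finset.sum_congr rfl fun g _ => ?_
    by_cases hg : Function.Injective g
    · have h1 : T ≤ N g := T_le_sum g hg
      have h2 : T + (N g - T) = N g := by omega
      have h3 : ε ^ N g = ε ^ T * ε ^ (N g - T) := by rw [← pow_add, h2]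
      rw [h3]
      ring
    · rw [hCzero g hg]
      ring
  -- value of F at 0
  have hF0 : F 0 = ∑ g ∈ Finset.univ.filter (fun g : Fin k → Fin p => N g ≤ T), e k * C g := by
    rw [hF, Finset.sum_filter]
    refine Finset.sum_congr rfl fun g _ => ?_
    rw [zero_pow_eq]
    by_cases hg : N g ≤ T
    · rw [if_pos (by omega), if_pos hg, one_mul]
    · rw [if_neg (by omega), if_neg hg, zero_mul]
  -- restrict to injective maps
  have hFilt : F 0 = ∑ g ∈ (Finset.univ.filter (fun g : Fin k → Fin p => N g ≤ T)).filter
      (fun g => Function.Injective g), e k * C g := by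
    rw [hF0]
    exact (Finset.sum_filter_of_ne (fun g _ hne => by
      by_contra hinj
      exact hne (by rw [hCzero g hinj, mul_zero]))).symm
  set ι : Fin k → Fin p := Fin.castLE hkp with hι
  set Φ : Equiv.Perm (Fin k) → (Fin k → Fin p) := fun π => ι ∘ π with hΦ
  have hinjΦ : ∀ x ∈ Finset.univ, ∀ y ∈ Finset.univ,
      Φ x = Φ y → (x : Equiv.Perm (Fin k)) = y := by
    intro x _ y _ hxy
    refine Equiv.ext fun i => ?_
    have h1 := congrFun hxy i
    exact Fin.castLE_injective hkp h1
  have himage : (Finset.univ.filter (fun g : Fin k → Fin p => N g ≤ T)).filter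
      (fun g => Function.Injective g) = Finset.image Φ Finset.univ := by
    ext g
    simp only [Finset.mem_filter, Finset.mem_image, Finset.mem_univ, true_and]
    constructor
    · rintro ⟨hNg, hinj⟩
      have hlt := lt_of_sum_le g hinj hNg
      have hinj' : Function.Injective (fun i => (⟨(g i : ℕ), hlt i⟩ : Fin k)) := by
        intro a b hab
        simp only [Fin.mk.injEq] at hab
        exact hinj (Fin.ext hab)
      refine ⟨(Equiv.ofBijective _ (Finite.injective_iff_bijective.mp hinj')).symm.symm, ?_⟩
      funext i
      exact Fin.ext rfl
    · rintro ⟨π, rfl⟩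
      constructor
      · have h1 : N (Φ π) = ∑ i : Fin k, ((π i : ℕ)) := rfl
        rw [h1, hT]
        exact le_of_eq (Equiv.sum_comp π (fun i : Fin k => (i : ℕ)))
      · exact (Fin.castLE_injective hkp).comp π.injective
  have hsum_perm : F 0 = ∑ π : Equiv.Perm (Fin k), e k * C (Φ π) := by
    rw [hFilt, himage, Finset.sum_image hinjΦ]
  set W : Matrix (Fin k) (Fin k) ℝ := Matrix.of fun i j => yc j ^ (i : ℕ) with hW
  set V : Matrix (Fin k) (Fin k) ℝ := Matrix.of fun a b => xr b ^ (a : ℕ) with hV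
  have hsg_prod : ∀ π : Equiv.Perm (Fin k), (∏ i, sg e ((Φ π) i : ℕ)) = e k := by
    intro π
    have h1 : (∏ i, sg e ((Φ π) i : ℕ)) = ∏ i : Fin k, sg e ((π i : ℕ)) := rfl
    rw [h1, Equiv.prod_comp π (fun i : Fin k => sg e (i : ℕ)),
      Fin.prod_univ_eq_prod_range (fun s => sg e s) k]
    exact prod_sg e he k hk1 hkp
  have hCΦ : ∀ π : Equiv.Perm (Fin k),
      C (Φ π) = (e k * ∏ i, xr i ^ ((π i : ℕ))) * (((Equiv.Perm.sign π : ℤ) : ℝ) * W.det) := by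
    intro π
    have h1 : (∏ i, sg e ((Φ π) i : ℕ) * xr i ^ ((Φ π) i : ℕ))
        = (∏ i, sg e ((Φ π) i : ℕ)) * ∏ i, xr i ^ ((π i : ℕ)) := by
      rw [← Finset.prod_mul_distrib]
      rfl
    have h2 : (Matrix.of fun i j => yc j ^ ((Φ π) i : ℕ)) = W.submatrix π id := rfl
    calc C (Φ π) = (∏ i, sg e ((Φ π) i : ℕ) * xr i ^ ((Φ π) i : ℕ)) *
          (W.submatrix π id).det := by simp only [hC]; rw [h2]
      _ = _ := by rw [h1, hsg_prod π, Matrix.det_permute]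
  have hFP : F 0 = V.det * W.det := by
    rw [hsum_perm]
    have hterm : ∀ π : Equiv.Perm (Fin k), e k * C (Φ π)
        = (((Equiv.Perm.sign π : ℤ) : ℝ) * ∏ i, xr i ^ ((π i : ℕ))) * W.det := by
      intro π
      rw [hCΦ π]
      calc e k * ((e k * ∏ i, xr i ^ ((π i : ℕ))) * (((Equiv.Perm.sign π : ℤ) : ℝ) * W.det))
          = (e k * e k) * ((((Equiv.Perm.sign π : ℤ) : ℝ) * ∏ i, xr i ^ ((π i : ℕ))) * W.det) := by
            ring
        _ = _ := by rw [he2, one_mul]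
    rw [Finset.sum_congr rfl (fun π _ => hterm π), ← Finset.sum_mul]
    congr 1
    rw [Matrix.det_apply']
    refine Finset.sum_congr rfl fun π _ => ?_
    congr 1
  have hxrm : StrictMono xr := by
    intro a b hab
    have h1 : (r a : ℕ) < (r b : ℕ) := hr hab
    simp only [hxr]
    have h2 : ((r a : ℕ) : ℝ) < ((r b : ℕ) : ℝ) := by exact_mod_cast h1
    linarith
  have hycm : StrictMono yc := by
    intro a b hab
    have h1 : (c a : ℕ) < (c b : ℕ) := hc hab
    simp only [hyc]
    have h2 : ((c a : ℕ) : ℝ) < ((c b : ℕ) : ℝ) := by exact_mod_cast h1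
    linarith
  have hV0 : 0 < V.det := by
    have hVt : V = (Matrix.vandermonde xr).transpose := rfl
    rw [hVt, Matrix.det_transpose, Matrix.det_vandermonde]
    refine Finset.prod_pos fun i _ => Finset.prod_pos fun j hj => ?_
    have hij : i < j := Finset.mem_Ioi.mp hj
    have := hxrm hij
    linarith
  have hW0 : 0 < W.det := by
    have hWt : W = (Matrix.vandermonde yc).transpose := rfl
    rw [hWt, Matrix.det_transpose, Matrix.det_vandermonde]
    refine Finset.prod_pos fun i _ => Finset.prod_pos fun j hj => ?_
    have hij : i < j := Finset.mem_Ioi.mp hj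
    have := hycm hij
    linarith
  have hF0pos : 0 < F 0 := by rw [hFP]; exact mul_pos hV0 hW0
  have hFc : ContinuousAt F 0 := by
    apply Continuous.continuousAt
    exact continuous_finset_sum _ fun g _ => ((continuous_pow _).mul continuous_const)
  have h1 : ∀ᶠ ε in nhds (0:ℝ), 0 < F ε := hFc.eventually (eventually_gt_nhds hF0pos)
  have h2 : ∀ᶠ ε in nhdsWithin (0:ℝ) (Set.Ioi 0), 0 < F ε := h1.filter_mono nhdsWithin_le_nhds
  have h3 : ∀ᶠ ε in nhdsWithin (0:ℝ) (Set.Ioi 0), ε ∈ Set.Ioi (0:ℝ) := eventually_mem_nhdsWithin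
  filter_upwards [h2, h3] with ε hFε hε
  rw [hident ε hε]
  exact mul_pos (pow_pos hε T) hFε

end SSRaux

/-- For any positive integers `m`, `n` and any signature `e` with `e k ∈ {-1, 1}`
for `1 ≤ k ≤ min m n`, there is an m-by-n real matrix that is strictly sign
regular with signature `e`: every k-by-k minor `D` satisfies `e k * D > 0`. -/
theorem exists_SSR_matrix (m n : ℕ) (hm : 0 < m) (hn : 0 < n) (e : ℕ → ℝ)
    (he : ∀ k, 1 ≤ k → k ≤ min m n → e k = 1 ∨ e k = -1) :
    ∃ A : Matrix (Fin m) (Fin n) ℝ,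
      ∀ (k : ℕ) (r : Fin k → Fin m) (c : Fin k → Fin n),
        0 < k → StrictMono r → StrictMono c →
          0 < e k * (A.submatrix r c).det := by
  classical
  have key' : ∀ᶠ ε in nhdsWithin (0:ℝ) (Set.Ioi 0),
      ∀ k : Fin (min m n + 1), ∀ r : Fin (k : ℕ) → Fin m, ∀ c : Fin (k : ℕ) → Fin n,
        0 < (k : ℕ) → StrictMono r → StrictMono c →
          0 < e (k : ℕ) * (((SSRaux.mat e m n ε)).submatrix r c).det := by
    rw [Filter.eventually_all]
    intro k
    rw [Filter.eventually_all]
    intro r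
    rw [Filter.eventually_all]
    intro c
    by_cases h1 : 0 < (k : ℕ) ∧ StrictMono r ∧ StrictMono c
    · obtain ⟨hk, hr, hc⟩ := h1
      filter_upwards [SSRaux.key e he r c hk hr hc] with ε hε _ _ _
      exact hε
    · filter_upwards with ε hk hr hc
      exact absurd ⟨hk, hr, hc⟩ h1
  obtain ⟨ε, hε⟩ := key'.exists
  refine ⟨SSRaux.mat e m n ε, ?_⟩
  intro k r c hk hr hc
  have hkm : k ≤ m := by simpa using Fintype.card_le_of_injective r hr.injective
  have hkn : k ≤ n := by simpa using Fintype.card_le_of_injective c hc.injective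
  have hkp : k < min m n + 1 := by omega
  exact hε ⟨k, hkp⟩ r c hk hr hc
end

section
/- Let G be a bipartite graph with parts U (size m) and V (size n), and fix a signature (e_k) with e_k ∈ {−1,1}. Let X be an m-by-n strictly sign regular matrix with the flipped signature (e_1,...,e_{k−1},−e_k,−e_{k+1},...), and let M be the partial matrix whose (i,j) entry is specified equal to X(i,j) exactly when {u_i, v_j} is an edge of G. Then G contains a balanced biclique with k vertices on each side if and only if M has a fully specified k-by-k submatrix D with e_k · det(D) < 0; in particular, G has a balanced biclique of size 2k if and only if M is not partial strictly sign regular with signature (e_k). -/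
/-- The co-NP-hardness reduction: let `G` be a bipartite graph with parts of
sizes `m` and `n` (adjacency `E`), `e` a ±1 signature, and `X` an m-by-n matrix
that is strictly sign regular with the signature flipped from position `k` on,
i.e. every l-by-l minor `D` of `X` satisfies `f l * D > 0` where `f l = e l` for
`l < k` and `f l = -e l` for `l ≥ k`.  Let `M` be the partial matrix whose
`(i,j)` entry is specified equal to `X i j` exactly when `{u_i, v_j}` is an edge.
Then `G` has a balanced biclique with `k` vertices on each side iff `M` has a
fully specified k-by-k submatrix `D` with `e k * det D < 0`, and iff `M` is not
partial strictly sign regular with signature `e`. -/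
theorem biclique_reduction (m n k : ℕ) (hk : 0 < k) (E : Fin m → Fin n → Bool)
    (e : ℕ → ℝ) (he : ∀ l, 1 ≤ l → l ≤ min m n → e l = 1 ∨ e l = -1)
    (X : Matrix (Fin m) (Fin n) ℝ)
    (hX : ∀ (l : ℕ) (r : Fin l → Fin m) (c : Fin l → Fin n),
      0 < l → StrictMono r → StrictMono c →
        0 < (if l < k then e l else -e l) * (X.submatrix r c).det)
    (M : Fin m → Fin n → Option ℝ)
    (hM : ∀ i j, M i j = if E i j then some (X i j) else none) :
    ((∃ (S : Finset (Fin m)) (T : Finset (Fin n)),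
        S.card = k ∧ T.card = k ∧ ∀ i ∈ S, ∀ j ∈ T, E i j) ↔
      (∃ (r : Fin k → Fin m) (c : Fin k → Fin n) (A : Matrix (Fin k) (Fin k) ℝ),
        StrictMono r ∧ StrictMono c ∧ (∀ i j, M (r i) (c j) = some (A i j)) ∧
          e k * A.det < 0)) ∧
    ((∃ (S : Finset (Fin m)) (T : Finset (Fin n)),
        S.card = k ∧ T.card = k ∧ ∀ i ∈ S, ∀ j ∈ T, E i j) ↔
      ¬ (∀ (l : ℕ) (r : Fin l → Fin m) (c : Fin l → Fin n), 0 < l →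
          StrictMono r → StrictMono c →
          ∀ A : Matrix (Fin l) (Fin l) ℝ,
            (∀ i j, M (r i) (c j) = some (A i j)) → 0 < e l * A.det)) := by
  -- From a specified submatrix, extract edges and equality with X
  have key : ∀ {l : ℕ} (r : Fin l → Fin m) (c : Fin l → Fin n)
      (A : Matrix (Fin l) (Fin l) ℝ), (∀ i j, M (r i) (c j) = some (A i j)) →
      (∀ i j, E (r i) (c j) = true) ∧ (∀ i j, X (r i) (c j) = A i j) := by
    intro l r c A h
    have h' : ∀ i j, E (r i) (c j) = true ∧ X (r i) (c j) = A i j := by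
      intro i j
      have := h i j
      rw [hM] at this
      by_cases hE : E (r i) (c j)
      · rw [if_pos hE] at this
        exact ⟨hE, Option.some.injEq _ _ ▸ this⟩
      · rw [if_neg hE] at this; exact absurd this (by simp)
    exact ⟨fun i j => (h' i j).1, fun i j => (h' i j).2⟩
  -- biclique gives the k×k witness
  have fwd : (∃ (S : Finset (Fin m)) (T : Finset (Fin n)),
      S.card = k ∧ T.card = k ∧ ∀ i ∈ S, ∀ j ∈ T, E i j) →
      (∃ (r : Fin k → Fin m) (c : Fin k → Fin n) (A : Matrix (Fin k) (Fin k) ℝ),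
        StrictMono r ∧ StrictMono c ∧ (∀ i j, M (r i) (c j) = some (A i j)) ∧
          e k * A.det < 0) := by
    rintro ⟨S, T, hS, hT, hST⟩
    set r := S.orderEmbOfFin hS with hr
    set c := T.orderEmbOfFin hT with hc
    refine ⟨r, c, X.submatrix r c, (S.orderEmbOfFin hS).strictMono,
      (T.orderEmbOfFin hT).strictMono, ?_, ?_⟩
    · intro i j
      rw [hM, if_pos (hST _ (S.orderEmbOfFin_mem hS i) _ (T.orderEmbOfFin_mem hT j))]
      rfl
    · have := hX k r c hk (S.orderEmbOfFin hS).strictMono (T.orderEmbOfFin hT).strictMono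
      rw [if_neg (lt_irrefl k)] at this
      nlinarith [this]
  -- a specified submatrix of size l ≥ k gives a biclique of size k
  have back : ∀ {l : ℕ} (r : Fin l → Fin m) (c : Fin l → Fin n)
      (A : Matrix (Fin l) (Fin l) ℝ), k ≤ l → StrictMono r → StrictMono c →
      (∀ i j, M (r i) (c j) = some (A i j)) →
      (∃ (S : Finset (Fin m)) (T : Finset (Fin n)),
        S.card = k ∧ T.card = k ∧ ∀ i ∈ S, ∀ j ∈ T, E i j) := by
    intro l r c A hkl hr hc h
    obtain ⟨hE, -⟩ := key r c A h
    set r' : Fin k → Fin m := fun i => r (Fin.castLE hkl i) with hr'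
    set c' : Fin k → Fin n := fun j => c (Fin.castLE hkl j) with hc'
    have hr'i : Function.Injective r' := fun a b hab => by
      have := hr.injective hab
      exact Fin.castLE_injective hkl this
    have hc'i : Function.Injective c' := fun a b hab => by
      have := hc.injective hab
      exact Fin.castLE_injective hkl this
    refine ⟨Finset.univ.image r', Finset.univ.image c', ?_, ?_, ?_⟩
    · rw [Finset.card_image_of_injective _ hr'i, Finset.card_univ, Fintype.card_fin]
    · rw [Finset.card_image_of_injective _ hc'i, Finset.card_univ, Fintype.card_fin]
    · intro i hi j hj
      obtain ⟨a, -, rfl⟩ := Finset.mem_image.mp hi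
      obtain ⟨b, -, rfl⟩ := Finset.mem_image.mp hj
      exact hE _ _
  constructor
  · constructor
    · exact fwd
    · rintro ⟨r, c, A, hr, hc, h, -⟩
      exact back r c A le_rfl hr hc h
  · constructor
    · intro hbi hssr
      obtain ⟨r, c, A, hr, hc, h, hdet⟩ := fwd hbi
      have := hssr k r c hk hr hc A h
      linarith
    · intro hssr
      push_neg at hssr
      obtain ⟨l, r, c, hl, hr, hc, A, h, hdet⟩ := hssr
      obtain ⟨-, hXA⟩ := key r c A h
      have hAeq : A = X.submatrix r c := by
        ext i j; exact (hXA i j).symm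
      by_cases hlk : l < k
      · exfalso
        have := hX l r c hl hr hc
        rw [if_pos hlk] at this
        rw [hAeq] at hdet
        linarith
      · exact back r c A (le_of_not_gt hlk) hr hc h
end

section
/- If a bipartite graph G has vertices a (in part U) and b (in part V) with no edge between them, then every maximal biclique of G is a maximal biclique of G − a or of G − b (the induced subgraphs obtained by deleting a or b respectively). -/
/-- `(S, T)` is a biclique of the bipartite graph with parts `U`, `V` and
adjacency `E`. -/
def Biclique {U V : Type*} (E : U → V → Prop) (S : Finset U) (T : Finset V) : Prop :=
  ∀ u ∈ S, ∀ v ∈ T, E u v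

/-- Maximality of `(S, T)` with respect to a class `P` of bicliques: no member
of `P` properly contains `(S, T)` componentwise. -/
def MaximalAmong {U V : Type*} (P : Finset U → Finset V → Prop)
    (S : Finset U) (T : Finset V) : Prop :=
  P S T ∧ ∀ S' T', P S' T' → S ⊆ S' → T ⊆ T' → S' = S ∧ T' = T

/-- If `a ∈ U` and `b ∈ V` are nonadjacent, then every maximal biclique of `G`
is a maximal biclique of `G - a` or of `G - b`. -/
theorem maximal_biclique_deleted (U V : Type*) (E : U → V → Prop) (a : U) (b : V)
    (hab : ¬ E a b) (S : Finset U) (T : Finset V)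
    (hmax : MaximalAmong (Biclique E) S T) :
    MaximalAmong (fun S' T' => Biclique E S' T' ∧ a ∉ S') S T ∨
    MaximalAmong (fun S' T' => Biclique E S' T' ∧ b ∉ T') S T := by
  obtain ⟨hB, hM⟩ := hmax
  by_cases ha : a ∈ S
  · right
    have hb : b ∉ T := fun hb => hab (hB a ha b hb)
    exact ⟨⟨hB, hb⟩, fun S' T' h hS hT => hM S' T' h.1 hS hT⟩
  · left
    exact ⟨⟨hB, ha⟩, fun S' T' h hS hT => hM S' T' h.1 hS hT⟩
end

section
/- If a partial matrix M has exactly one unspecified entry, at position (i,j), then M is partial totally positive if and only if the (fully specified) matrix obtained by deleting row i is totally positive and the matrix obtained by deleting column j is totally positive. -/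
/-- A real matrix is totally positive if every minor is positive. -/
def TotallyPositive {m n : ℕ} (A : Matrix (Fin m) (Fin n) ℝ) : Prop :=
  ∀ (k : ℕ) (r : Fin k → Fin m) (c : Fin k → Fin n),
    StrictMono r → StrictMono c → 0 < (A.submatrix r c).det

/-- Partial total positivity: every fully specified square submatrix has
positive determinant. -/
def PartialTP {m n : ℕ} (M : Fin m → Fin n → Option ℝ) : Prop :=
  ∀ (k : ℕ) (r : Fin k → Fin m) (c : Fin k → Fin n), StrictMono r → StrictMono c →
    ∀ A : Matrix (Fin k) (Fin k) ℝ, (∀ i j, M (r i) (c j) = some (A i j)) → 0 < A.det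

/-- If a partial matrix `M` has exactly one unspecified entry, at position
`(i,j)`, then `M` is partial totally positive iff the conventional matrix `A`
obtained by deleting row `i` is totally positive and the conventional matrix
`B` obtained by deleting column `j` is totally positive. -/
theorem partialTP_one_unspecified (m n : ℕ)
    (M : Fin (m + 1) → Fin (n + 1) → Option ℝ) (i : Fin (m + 1)) (j : Fin (n + 1))
    (hone : ∀ a b, M a b = none ↔ a = i ∧ b = j)
    (A : Matrix (Fin m) (Fin (n + 1)) ℝ) (hA : ∀ a b, M (i.succAbove a) b = some (A a b))
    (B : Matrix (Fin (m + 1)) (Fin n) ℝ) (hB : ∀ a b, M a (j.succAbove b) = some (B a b)) :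
    PartialTP M ↔ TotallyPositive A ∧ TotallyPositive B := by
  constructor
  · intro h
    constructor
    · intro k r c hr hc
      exact h k (i.succAbove ∘ r) c ((Fin.strictMono_succAbove i).comp hr) hc
        (A.submatrix r c) (fun a b => hA (r a) (c b))
    · intro k r c hr hc
      exact h k r (j.succAbove ∘ c) hr ((Fin.strictMono_succAbove j).comp hc)
        (B.submatrix r c) (fun a b => hB (r a) (c b))
  · rintro ⟨hTA, hTB⟩ k r c hr hc A' hA'
    by_cases hrow : ∀ a, r a ≠ i
    · choose r' hr' using fun a => Fin.exists_succAbove_eq (hrow a)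
      have hr'm : StrictMono r' := fun a b hab => by
        have := hr hab
        rw [← hr' a, ← hr' b] at this
        exact (Fin.strictMono_succAbove i).lt_iff_lt.mp this
      have hdet := hTA k r' c hr'm hc
      have : A.submatrix r' c = A' := by
        ext a b
        have h1 := hA (r' a) (c b)
        rw [hr' a] at h1
        have h2 := hA' a b
        rw [h1] at h2
        exact Option.some_injective _ h2
      rwa [this] at hdet
    · push_neg at hrow
      obtain ⟨a0, ha0⟩ := hrow
      have hcol : ∀ b, c b ≠ j := by
        intro b hb
        have := hA' a0 b
        rw [ha0, hb, (hone i j).mpr ⟨rfl, rfl⟩] at this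
        exact Option.some_ne_none _ this.symm
      choose c' hc' using fun b => Fin.exists_succAbove_eq (hcol b)
      have hc'm : StrictMono c' := fun a b hab => by
        have := hc hab
        rw [← hc' a, ← hc' b] at this
        exact (Fin.strictMono_succAbove j).lt_iff_lt.mp this
      have hdet := hTB k r c' hr hc'm
      have : B.submatrix r c' = A' := by
        ext a b
        have h1 := hB (r a) (c' b)
        rw [hc' b] at h1
        have h2 := hA' a b
        rw [h1] at h2
        exact Option.some_injective _ h2
      rwa [this] at hdet
end
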